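/- For every odd integer N ≥ 1, the rational function P̃(X,Y) = X^{N−1}/Y − Y^{N−1}/X − (X^{N−1} − Y^{N−1})/(X+Y) is a nonzero element of FSh₂(N) which is not a polynomial. -/

import Mathlib

noncomputable section

open MvPolynomial

/-- The polynomial ring `ℚ[X,Y]`, with `X = X 0` and `Y = X 1`. -/
abbrev R2 : Type := MvPolynomial (Fin 2) ℚ

/-- The field of rational functions `ℚ(X,Y)`. -/
abbrev K2 : Type := FractionRing R2

/-- The substitution `(X, Y) ↦ (X + Y, -Y)` on polynomials. -/
def fayA : R2 →ₐ[ℚ] R2 := aeval ![X 0 + X 1, -X 1]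

/-- The substitution `(X, Y) ↦ (-X - Y, X)` on polynomials. -/
def rotA : R2 →ₐ[ℚ] R2 := aeval ![-X 0 - X 1, X 0]

/-- The substitution `(X, Y) ↦ (Y, X)` on polynomials. -/
def swapA : R2 →ₐ[ℚ] R2 := aeval ![X 1, X 0]

lemma fayA_invol : fayA.comp fayA = AlgHom.id ℚ R2 := by
  apply algHom_ext
  intro i
  fin_cases i <;> simp [fayA]

lemma rotA_cube : rotA.comp (rotA.comp rotA) = AlgHom.id ℚ R2 := by
  apply algHom_ext
  intro i
  fin_cases i <;> simp [rotA]

lemma swapA_invol : swapA.comp swapA = AlgHom.id ℚ R2 := by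
  apply algHom_ext
  intro i
  fin_cases i <;> simp [swapA]

lemma fayA_inj : Function.Injective fayA :=
  Function.LeftInverse.injective (g := fayA) fun x => by
    simpa using DFunLike.congr_fun fayA_invol x

lemma rotA_inj : Function.Injective rotA :=
  Function.LeftInverse.injective (g := rotA.comp rotA) fun x => by
    simpa using DFunLike.congr_fun rotA_cube x

lemma swapA_inj : Function.Injective swapA :=
  Function.LeftInverse.injective (g := swapA) fun x => by
    simpa using DFunLike.congr_fun swapA_invol x

/-- Lift an injective substitution on `ℚ[X,Y]` to the fraction field `ℚ(X,Y)`. -/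
def liftK (φ : R2 →ₐ[ℚ] R2) (hφ : Function.Injective φ) : K2 →+* K2 :=
  IsFractionRing.lift (g := (algebraMap R2 K2).comp φ.toRingHom)
    (fun _ _ h => hφ (IsFractionRing.injective R2 K2 h))

/-- `P(X,Y) ↦ P(X+Y, -Y)` as a `ℚ`-linear endomorphism of `ℚ(X,Y)`. -/
def fayL : K2 →ₗ[ℚ] K2 :=
  { toFun := (liftK fayA fayA_inj).toRatAlgHom, map_add' := map_add _,
    map_smul' := fun c x => map_rat_smul (liftK fayA fayA_inj) c x }

/-- `P(X,Y) ↦ P(-X-Y, X)` as a `ℚ`-linear endomorphism of `ℚ(X,Y)`. -/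
def rotL : K2 →ₗ[ℚ] K2 :=
  { toFun := (liftK rotA rotA_inj).toRatAlgHom, map_add' := map_add _,
    map_smul' := fun c x => map_rat_smul (liftK rotA rotA_inj) c x }

/-- `P(X,Y) ↦ P(Y, X)` as a `ℚ`-linear endomorphism of `ℚ(X,Y)`. -/
def swapL : K2 →ₗ[ℚ] K2 :=
  { toFun := (liftK swapA swapA_inj).toRatAlgHom, map_add' := map_add _,
    map_smul' := fun c x => map_rat_smul (liftK swapA swapA_inj) c x }

/-- The inclusion `ℚ[X,Y] → ℚ(X,Y)` as a `ℚ`-linear map. -/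
def algL : R2 →ₗ[ℚ] K2 :=
  { toFun := IsScalarTower.toAlgHom ℚ R2 K2, map_add' := map_add _,
    map_smul' := fun c x => map_rat_smul (IsScalarTower.toAlgHom ℚ R2 K2) c x }

/-- The element `X·Y ∈ ℚ(X,Y)`. -/
def xyK : K2 := algebraMap R2 K2 (X 0 * X 1)

/-- The length-two Fay-shuffle space `FSh₂(N)`: rational functions `P(X,Y)`,
homogeneous of degree `N - 2` with at most simple poles along `X = 0` and `Y = 0`
and no other poles (equivalently, `X·Y·P` is a homogeneous polynomial of degree `N`),
satisfying the Fay relation `P(X,Y) + P(X+Y,-Y) + P(-X-Y,X) = 0` and the shuffle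
relation `P(X,Y) + P(Y,X) = 0`. -/
def FSh (N : ℕ) : Submodule ℚ K2 :=
  (Submodule.map algL (homogeneousSubmodule (Fin 2) ℚ N)).comap (LinearMap.mulLeft ℚ xyK)
    ⊓ LinearMap.ker (LinearMap.id + fayL + rotL)
    ⊓ LinearMap.ker (LinearMap.id + swapL)


/-- The element `P̃(X,Y) = X^(N-1)/Y - Y^(N-1)/X - (X^(N-1) - Y^(N-1))/(X+Y)` of `ℚ(X,Y)`. -/
def Ptil (N : ℕ) : K2 :=
  (algebraMap R2 K2 (X 0)) ^ (N - 1) / algebraMap R2 K2 (X 1)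
    - (algebraMap R2 K2 (X 1)) ^ (N - 1) / algebraMap R2 K2 (X 0)
    - ((algebraMap R2 K2 (X 0)) ^ (N - 1) - (algebraMap R2 K2 (X 1)) ^ (N - 1))
        / (algebraMap R2 K2 (X 0) + algebraMap R2 K2 (X 1))


/-! ### Auxiliary lemmas -/

lemma liftK_algebraMap (φ : R2 →ₐ[ℚ] R2) (hφ : Function.Injective φ) (p : R2) :
    liftK φ hφ (algebraMap R2 K2 p) = algebraMap R2 K2 (φ p) :=
  IsFractionRing.lift_algebraMap _ _

lemma fayL_apply (z : K2) : fayL z = liftK fayA fayA_inj z := rfl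
lemma rotL_apply (z : K2) : rotL z = liftK rotA rotA_inj z := rfl
lemma swapL_apply (z : K2) : swapL z = liftK swapA swapA_inj z := rfl

lemma fayA_X0 : fayA (X 0) = X 0 + X 1 := by simp [fayA]
lemma fayA_X1 : fayA (X 1) = -X 1 := by simp [fayA]
lemma rotA_X0 : rotA (X 0) = -(X 0 + X 1) := by simp [rotA]; ring
lemma rotA_X1 : rotA (X 1) = X 0 := by simp [rotA]
lemma swapA_X0 : swapA (X 0) = X 1 := by simp [swapA]
lemma swapA_X1 : swapA (X 1) = X 0 := by simp [swapA]

lemma algL_apply (p : R2) : algL p = algebraMap R2 K2 p := rfl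

lemma aX_ne_zero (i : Fin 2) : algebraMap R2 K2 (X i) ≠ 0 := fun h =>
  X_ne_zero i (IsFractionRing.injective R2 K2 (by simp only [map_zero] at h ⊢; exact h))

lemma sumX_ne_zero : (X 0 + X 1 : R2) ≠ 0 := fun h => by
  have := congrArg (MvPolynomial.eval (fun _ => (1:ℚ))) h
  simp at this

lemma aSum_ne_zero : algebraMap R2 K2 (X 0) + algebraMap R2 K2 (X 1) ≠ 0 := fun h => by
  rw [← map_add] at h
  exact sumX_ne_zero (IsFractionRing.injective R2 K2 (by simp only [map_zero] at h ⊢; exact h))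

set_option maxHeartbeats 2000000 in
/-- For every odd `N ≥ 1`, the rational function `P̃` is a nonzero element of
`FSh₂(N)` which is not a polynomial. -/
theorem Ptil_mem_FSh (N : ℕ) (hN : Odd N) (h1 : 1 ≤ N) :
    Ptil N ∈ FSh N ∧ Ptil N ≠ 0 ∧ Ptil N ∉ Set.range (algebraMap R2 K2) := by
  obtain ⟨m, rfl⟩ : ∃ m, N = m + 1 := ⟨N - 1, by omega⟩
  have hm : Even m := by rcases hN with ⟨k, hk⟩; exact ⟨k, by omega⟩
  have hx := aX_ne_zero 0
  have hy := aX_ne_zero 1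
  have hs := aSum_ne_zero
  have hs' : algebraMap R2 K2 (X 1) + algebraMap R2 K2 (X 0) ≠ 0 := by
    rw [add_comm]; exact hs
  have hPt : Ptil (m+1) = (algebraMap R2 K2 (X 0)) ^ m / algebraMap R2 K2 (X 1)
      - (algebraMap R2 K2 (X 1)) ^ m / algebraMap R2 K2 (X 0)
      - ((algebraMap R2 K2 (X 0)) ^ m - (algebraMap R2 K2 (X 1)) ^ m)
        / (algebraMap R2 K2 (X 0) + algebraMap R2 K2 (X 1)) := by
    rw [Ptil]; simp only [Nat.add_sub_cancel]
  have hF : liftK fayA fayA_inj (Ptil (m+1)) =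
      -((algebraMap R2 K2 (X 0) + algebraMap R2 K2 (X 1)) ^ m / (algebraMap R2 K2 (X 1)))
      - (algebraMap R2 K2 (X 1)) ^ m / (algebraMap R2 K2 (X 0) + algebraMap R2 K2 (X 1))
      - ((algebraMap R2 K2 (X 0) + algebraMap R2 K2 (X 1)) ^ m - (algebraMap R2 K2 (X 1)) ^ m)
        / (algebraMap R2 K2 (X 0)) := by
    rw [hPt]
    simp only [map_sub, map_div₀, map_pow, liftK_algebraMap, fayA_X0, fayA_X1,
      map_add, map_neg, hm.neg_pow, div_neg]
    rw [show algebraMap R2 K2 (X 0) + algebraMap R2 K2 (X 1) + -(algebraMap R2 K2 (X 1))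
        = algebraMap R2 K2 (X 0) from by ring]
  have hG : liftK rotA rotA_inj (Ptil (m+1)) =
      (algebraMap R2 K2 (X 0) + algebraMap R2 K2 (X 1)) ^ m / (algebraMap R2 K2 (X 0))
      + (algebraMap R2 K2 (X 0)) ^ m / (algebraMap R2 K2 (X 0) + algebraMap R2 K2 (X 1))
      + ((algebraMap R2 K2 (X 0) + algebraMap R2 K2 (X 1)) ^ m - (algebraMap R2 K2 (X 0)) ^ m)
        / (algebraMap R2 K2 (X 1)) := by
    rw [hPt]
    simp only [map_sub, map_div₀, map_pow, liftK_algebraMap, rotA_X0, rotA_X1,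
      map_add, map_neg, hm.neg_pow]
    rw [show -(algebraMap R2 K2 (X 0) + algebraMap R2 K2 (X 1)) + algebraMap R2 K2 (X 0)
        = -(algebraMap R2 K2 (X 1)) from by ring]
    simp only [div_neg, sub_neg_eq_add]
  have hS : liftK swapA swapA_inj (Ptil (m+1)) =
      (algebraMap R2 K2 (X 1)) ^ m / (algebraMap R2 K2 (X 0))
      - (algebraMap R2 K2 (X 0)) ^ m / (algebraMap R2 K2 (X 1))
      - ((algebraMap R2 K2 (X 1)) ^ m - (algebraMap R2 K2 (X 0)) ^ m)
        / (algebraMap R2 K2 (X 1) + algebraMap R2 K2 (X 0)) := by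
    rw [hPt]
    simp only [map_sub, map_div₀, map_pow, liftK_algebraMap, swapA_X0, swapA_X1, map_add]
  have hDmul : (∑ i ∈ Finset.range m, (X 0 : R2) ^ i * (-X 1) ^ (m - 1 - i)) * (X 0 + X 1)
      = X 0 ^ m - X 1 ^ m := by
    have h := geom_sum₂_mul (X 0 : R2) (-(X 1)) m
    rw [sub_neg_eq_add, hm.neg_pow] at h
    exact h
  have hdiv : ((algebraMap R2 K2 (X 0)) ^ m - (algebraMap R2 K2 (X 1)) ^ m)
      / (algebraMap R2 K2 (X 0) + algebraMap R2 K2 (X 1))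
      = algebraMap R2 K2 (∑ i ∈ Finset.range m, (X 0 : R2) ^ i * (-X 1) ^ (m - 1 - i)) := by
    rw [div_eq_iff hs, ← map_add, ← map_mul, hDmul, map_sub, map_pow, map_pow]
  have hqhom : (X 0 ^ (m+1) - X 1 ^ (m+1)
      - X 0 * X 1 * ∑ i ∈ Finset.range m, (X 0 : R2) ^ i * (-X 1) ^ (m - 1 - i)).IsHomogeneous
        (m+1) := by
    refine ((isHomogeneous_X_pow _ _).sub (isHomogeneous_X_pow _ _)).sub ?_
    rw [Finset.mul_sum]
    refine IsHomogeneous.sum _ _ _ fun i hi => ?_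
    rw [Finset.mem_range] at hi
    have e : m + 1 = (1 + 1) + (i + 1 * (m - 1 - i)) := by omega
    rw [e]
    exact (((isHomogeneous_X ℚ 0).mul (isHomogeneous_X ℚ 1)).mul
      ((isHomogeneous_X_pow 0 i).mul (((isHomogeneous_X ℚ 1).neg).pow (m-1-i))))
  have hqK : algebraMap R2 K2 (X 0 ^ (m+1) - X 1 ^ (m+1)
      - X 0 * X 1 * ∑ i ∈ Finset.range m, (X 0 : R2) ^ i * (-X 1) ^ (m - 1 - i))
      = xyK * Ptil (m+1) := by
    rw [hPt, xyK, hdiv, map_sub, map_sub, map_mul, map_pow, map_pow, map_mul]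
    field_simp
    ring
  have hnp : Ptil (m+1) ∉ Set.range (algebraMap R2 K2) := by
    rintro ⟨p, hp⟩
    have h2 : algebraMap R2 K2 ((X 0 : R2) * X 1 * p)
        = algebraMap R2 K2 (X 0 ^ (m+1) - X 1 ^ (m+1)
          - X 0 * X 1 * ∑ i ∈ Finset.range m, (X 0 : R2) ^ i * (-X 1) ^ (m - 1 - i)) := by
      rw [map_mul, hp, hqK]
      rfl
    have h3 := IsFractionRing.injective R2 K2 h2
    have h5 := congrArg (aeval (![X 0, 0] : Fin 2 → R2)) h3
    simp only [map_sub, map_mul, map_pow, aeval_X, Matrix.cons_val_zero,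
      Matrix.cons_val_one, Matrix.head_cons, mul_zero, zero_mul,
      zero_pow (Nat.succ_ne_zero m), sub_zero] at h5
    exact pow_ne_zero _ (X_ne_zero 0) h5.symm
  refine ⟨?_, fun h => hnp ⟨0, by rw [map_zero, h]⟩, hnp⟩
  rw [FSh, Submodule.mem_inf, Submodule.mem_inf]
  refine ⟨⟨?_, ?_⟩, ?_⟩
  · rw [Submodule.mem_comap]
    refine Submodule.mem_map.2 ⟨_, (mem_homogeneousSubmodule _ _).2 hqhom, ?_⟩
    rw [algL_apply, LinearMap.mulLeft_apply]
    exact hqK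
  · rw [LinearMap.mem_ker]
    simp only [LinearMap.add_apply, LinearMap.id_apply, fayL_apply, rotL_apply]
    rw [hF, hG, hPt]
    field_simp
    ring
  · rw [LinearMap.mem_ker]
    simp only [LinearMap.add_apply, LinearMap.id_apply, swapL_apply]
    rw [hS, hPt]
    field_simp
    ring


end
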